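/- Let n ≥ 1, let p ≥ 1 be a real number, let σ(x) = 1/(1 + e^{−x}) be the logistic function, and let f : ℝⁿ → ℝ satisfy f(v) ≥ 0 for all v ∈ ℝⁿ. For t ∈ (0,1)ⁿ, set v = σ^{−1}(t) componentwise, and define δ^f(v)ᵢ = f(v) if i is the (least) index attaining the maximum of the components of v and 0 otherwise; define δ^g(t) = σ(v + δ^f(v)) − σ(v) (componentwise). Then: (1) for every t ∈ (0,1)ⁿ and every index i, δ^g(t)ᵢ ∈ [0,1] and 0 ≤ tᵢ + δ^g(t)ᵢ ≤ 1, i.e. δ^g is a t-conorm boost function on (0,1)ⁿ; and (2) δ^g is minimal for the Gödel t-conorm and the l_p-norm: for every t-conorm boost function δ′ : [0,1]ⁿ → [0,1]ⁿ and every t ∈ (0,1)ⁿ, if ‖δ′(t)‖_p < ‖δ^g(t)‖_p then max_{j=1}^{n} (t_j + δ′(t)_j) < max_{j=1}^{n} (t_j + δ^g(t)_j). -/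

import Mathlib

/-- The logistic function `σ(x) = 1/(1 + e^{−x})`. -/
noncomputable def logistic (x : ℝ) : ℝ := 1 / (1 + Real.exp (-x))

/-- The logit function, inverse of the logistic: `σ⁻¹(t) = log(t/(1−t))` for `t ∈ (0,1)`. -/
noncomputable def logit (t : ℝ) : ℝ := Real.log (t / (1 - t))

/-- The least index attaining the maximum of the components of `t : Fin (n+1) → ℝ`. -/
noncomputable def argmaxIdx {n : ℕ} (t : Fin (n + 1) → ℝ) : Fin (n + 1) :=
  (Finset.univ.filter (fun i => ∀ j, t j ≤ t i)).min' (by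
    obtain ⟨i, -, hi⟩ :=
      Finset.exists_max_image (Finset.univ : Finset (Fin (n + 1))) t ⟨0, Finset.mem_univ 0⟩
    exact ⟨i, Finset.mem_filter.mpr ⟨Finset.mem_univ i, fun j => hi j (Finset.mem_univ j)⟩⟩)

/-- `δ^f(v)ᵢ = f(v)` if `i` is the least index attaining the maximum of the components
of `v`, and `0` otherwise. -/
noncomputable def deltaF {n : ℕ} (f : (Fin (n + 1) → ℝ) → ℝ)
    (v : Fin (n + 1) → ℝ) (i : Fin (n + 1)) : ℝ :=
  if i = argmaxIdx v then f v else 0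

/-- `δ^g(t)ᵢ = σ(vᵢ + δ^f(v)ᵢ) − σ(vᵢ)` where `v = σ⁻¹(t)` componentwise. -/
noncomputable def deltaG {n : ℕ} (f : (Fin (n + 1) → ℝ) → ℝ)
    (t : Fin (n + 1) → ℝ) (i : Fin (n + 1)) : ℝ :=
  logistic (logit (t i) + deltaF f (fun j => logit (t j)) i) - logistic (logit (t i))

/-- The `l_p`-norm of a vector: `‖x‖_p = (∑ k |x_k|^p)^(1/p)`. -/
noncomputable def lpNorm {n : ℕ} (p : ℝ) (x : Fin (n + 1) → ℝ) : ℝ :=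
  (∑ k, |x k| ^ p) ^ (1 / p)

lemma logistic_pos (x : ℝ) : 0 < logistic x := by
  unfold logistic; positivity

lemma logistic_lt_one (x : ℝ) : logistic x < 1 := by
  unfold logistic
  rw [div_lt_one (by positivity)]
  linarith [Real.exp_pos (-x)]

lemma logistic_mono : Monotone logistic := by
  intro a b hab
  unfold logistic
  apply div_le_div_of_nonneg_left one_pos.le (by positivity)
  have := Real.exp_le_exp.mpr (neg_le_neg hab)
  linarith

lemma logistic_logit {s : ℝ} (h0 : 0 < s) (h1 : s < 1) : logistic (logit s) = s := by
  unfold logistic logit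
  rw [Real.exp_neg, Real.exp_log (div_pos h0 (by linarith))]
  field_simp
  ring

lemma logit_le {a b : ℝ} (ha0 : 0 < a) (ha1 : a < 1) (hb0 : 0 < b) (hb1 : b < 1)
    (h : logit a ≤ logit b) : a ≤ b := by
  unfold logit at h
  rw [Real.log_le_log_iff (div_pos ha0 (by linarith)) (div_pos hb0 (by linarith))] at h
  rw [div_le_div_iff₀ (by linarith) (by linarith)] at h
  nlinarith

lemma argmaxIdx_spec {n : ℕ} (t : Fin (n + 1) → ℝ) (j : Fin (n + 1)) :
    t j ≤ t (argmaxIdx t) := by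
  have hmem := Finset.min'_mem
    (Finset.univ.filter (fun i => ∀ j, t j ≤ t i)) (by
      obtain ⟨i, -, hi⟩ :=
        Finset.exists_max_image (Finset.univ : Finset (Fin (n + 1))) t ⟨0, Finset.mem_univ 0⟩
      exact ⟨i, Finset.mem_filter.mpr ⟨Finset.mem_univ i, fun j => hi j (Finset.mem_univ j)⟩⟩)
  exact (Finset.mem_filter.mp hmem).2 j


/-- For any nonnegative `f : ℝⁿ → ℝ`, the function `δ^g(t) = σ(v + δ^f(v)) − σ(v)`
(with `v = σ⁻¹(t)`) is a t-conorm boost function on `(0,1)ⁿ`, and it is minimal for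
the Gödel t-conorm and the `l_p`-norm: for every t-conorm boost function `δ′` and
every `t ∈ (0,1)ⁿ`, `‖δ′(t)‖_p < ‖δ^g(t)‖_p` implies
`max_j (t_j + δ′(t)_j) < max_j (t_j + δ^g(t)_j)`. -/
theorem deltaG_is_minimal_tbf (n : ℕ) (p : ℝ) (hp : 1 ≤ p)
    (f : (Fin (n + 1) → ℝ) → ℝ) (hf : ∀ v : Fin (n + 1) → ℝ, 0 ≤ f v) :
    (∀ t : Fin (n + 1) → ℝ, (∀ i, t i ∈ Set.Ioo (0 : ℝ) 1) →
      ∀ i, deltaG f t i ∈ Set.Icc (0 : ℝ) 1 ∧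
        t i + deltaG f t i ∈ Set.Icc (0 : ℝ) 1) ∧
    (∀ δ' : (Fin (n + 1) → ℝ) → (Fin (n + 1) → ℝ),
      (∀ t : Fin (n + 1) → ℝ, (∀ i, t i ∈ Set.Icc (0 : ℝ) 1) →
        ∀ i, δ' t i ∈ Set.Icc (0 : ℝ) 1 ∧ t i + δ' t i ∈ Set.Icc (0 : ℝ) 1) →
      ∀ t : Fin (n + 1) → ℝ, (∀ i, t i ∈ Set.Ioo (0 : ℝ) 1) →
        lpNorm p (δ' t) < lpNorm p (deltaG f t) →
        Finset.univ.sup' Finset.univ_nonempty (fun j => t j + δ' t j) <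
          Finset.univ.sup' Finset.univ_nonempty (fun j => t j + deltaG f t j)) := by
  have hp0 : 0 < p := lt_of_lt_of_le one_pos hp
  -- basic facts about deltaG
  have key : ∀ t : Fin (n + 1) → ℝ, (∀ i, t i ∈ Set.Ioo (0 : ℝ) 1) →
      ∀ i, 0 ≤ deltaG f t i ∧ t i + deltaG f t i = logistic (logit (t i) + deltaF f (fun j => logit (t j)) i) := by
    intro t ht i
    have h0 := (ht i).1
    have h1 := (ht i).2
    have hd : 0 ≤ deltaF f (fun j => logit (t j)) i := by
      unfold deltaF; split
      · exact hf _
      · exact le_refl 0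
    constructor
    · unfold deltaG
      have := logistic_mono (le_add_of_nonneg_right hd : logit (t i) ≤ logit (t i) + _)
      linarith
    · unfold deltaG
      rw [logistic_logit h0 h1]
      ring
  constructor
  · intro t ht i
    have h0 := (ht i).1
    have h1 := (ht i).2
    obtain ⟨hge, heq⟩ := key t ht i
    have hlt := logistic_lt_one (logit (t i) + deltaF f (fun j => logit (t j)) i)
    have hpos := logistic_pos (logit (t i) + deltaF f (fun j => logit (t j)) i)
    constructor
    · exact ⟨hge, by linarith⟩
    · exact ⟨by linarith, by linarith⟩
  · intro δ' hδ' t ht hlp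
    set v : Fin (n + 1) → ℝ := fun j => logit (t j) with hv
    set m := argmaxIdx v with hm
    -- deltaG is zero off m
    have hzero : ∀ i, i ≠ m → deltaG f t i = 0 := by
      intro i hi
      unfold deltaG deltaF
      rw [if_neg hi]
      ring_nf
    -- t j ≤ t m for all j
    have htle : ∀ j, t j ≤ t m := by
      intro j
      exact logit_le (ht j).1 (ht j).2 (ht m).1 (ht m).2 (argmaxIdx_spec v j)
    set C := deltaG f t m with hC
    have hC0 : 0 ≤ C := (key t ht m).1
    -- lpNorm of deltaG equals C
    have hlpG : lpNorm p (deltaG f t) = C := by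
      unfold lpNorm
      have : ∀ k : Fin (n + 1), |deltaG f t k| ^ p = if k = m then C ^ p else 0 := by
        intro k
        by_cases hk : k = m
        · rw [if_pos hk, hk, abs_of_nonneg hC0]
        · rw [if_neg hk, hzero k hk, abs_zero, Real.zero_rpow (ne_of_gt hp0)]
      rw [Finset.sum_congr rfl fun k _ => this k, Finset.sum_ite_eq' _ m, if_pos (Finset.mem_univ m)]
      rw [← Real.rpow_mul hC0, mul_one_div, div_self (ne_of_gt hp0), Real.rpow_one]
    -- each |δ' t j| ≤ lpNorm p (δ' t)
    have habs : ∀ j, |δ' t j| ≤ lpNorm p (δ' t) := by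
      intro j
      have h1 : |δ' t j| ^ p ≤ ∑ k, |δ' t k| ^ p :=
        Finset.single_le_sum (fun k _ => Real.rpow_nonneg (abs_nonneg _) p) (Finset.mem_univ j)
      have h2 : (|δ' t j| ^ p) ^ (1/p) ≤ (∑ k, |δ' t k| ^ p) ^ (1/p) :=
        Real.rpow_le_rpow (Real.rpow_nonneg (abs_nonneg _) p) h1 (by positivity)
      rwa [← Real.rpow_mul (abs_nonneg _), mul_one_div, div_self (ne_of_gt hp0), Real.rpow_one] at h2
    rw [hlpG] at hlp
    -- RHS sup' ≥ t m + C
    have hrhs : t m + C ≤ Finset.univ.sup' Finset.univ_nonempty (fun j => t j + deltaG f t j) :=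
      Finset.le_sup' (fun j => t j + deltaG f t j) (Finset.mem_univ m)
    apply lt_of_lt_of_le _ hrhs
    rw [Finset.sup'_lt_iff]
    intro j _
    have : δ' t j ≤ |δ' t j| := le_abs_self _
    have := habs j
    have := htle j
    linarith
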